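/- arXiv:0810.1439 — 4 statements merged into one kernel-verified Lean document; each statement's English description precedes it below -/
import Mathlib

section
/- Let y₁, y₂, y₃, y₄ ∈ ℝ² be pairwise distinct. Then the three conditions (y₁ + y₃)/2 = (y₂ + y₄)/2, ‖y₁ − y₃‖ = ‖y₂ − y₄‖, and ‖y₁ − y₂‖ − ‖y₂ − y₃‖ + ‖y₃ − y₄‖ − ‖y₄ − y₁‖ = 0 hold simultaneously if and only if y₁, y₂, y₃, y₄ are the consecutive vertices of a square. -/
open Real

noncomputable section

/-- Characterization of squares among quadruples of pairwise distinct points of the plane: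
the test equations of the square peg problem vanish simultaneously iff the four points are
the consecutive vertices of a square. -/
theorem square_test_characterization
    (y₁ y₂ y₃ y₄ : EuclideanSpace ℝ (Fin 2))
    (h₁₂ : y₁ ≠ y₂) (h₁₃ : y₁ ≠ y₃) (h₁₄ : y₁ ≠ y₄)
    (h₂₃ : y₂ ≠ y₃) (h₂₄ : y₂ ≠ y₄) (h₃₄ : y₃ ≠ y₄) :
    (midpoint ℝ y₁ y₃ = midpoint ℝ y₂ y₄ ∧
     ‖y₁ - y₃‖ = ‖y₂ - y₄‖ ∧
     ‖y₁ - y₂‖ - ‖y₂ - y₃‖ + ‖y₃ - y₄‖ - ‖y₄ - y₁‖ = 0) ↔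
    (y₁ + y₃ = y₂ + y₄ ∧
     ‖y₁ - y₂‖ = ‖y₂ - y₃‖ ∧
     (inner ℝ (y₂ - y₁) (y₃ - y₂) : ℝ) = 0) := by
  have hmid : (midpoint ℝ y₁ y₃ = midpoint ℝ y₂ y₄) ↔ y₁ + y₃ = y₂ + y₄ := by
    rw [midpoint_eq_smul_add, midpoint_eq_smul_add]
    constructor
    · intro h
      have h2 := congrArg (fun x => (2 : ℝ) • x) h
      simpa [smul_smul] using h2
    · intro h; rw [h]
  constructor
  · rintro ⟨h1, h2, h3⟩
    have hsum : y₁ + y₃ = y₂ + y₄ := hmid.mp h1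
    have hy4 : y₄ = y₁ + y₃ - y₂ := by
      rw [eq_sub_iff_add_eq, add_comm]; exact hsum.symm
    subst hy4
    refine ⟨hsum, ?_, ?_⟩
    · have e1 : y₃ - (y₁ + y₃ - y₂) = y₂ - y₁ := by abel
      have e2 : (y₁ + y₃ - y₂) - y₁ = y₃ - y₂ := by abel
      rw [e1, e2, norm_sub_rev y₂ y₁, norm_sub_rev y₃ y₂] at h3
      linarith
    · set a := y₂ - y₁ with ha
      set b := y₃ - y₂ with hb
      have e3 : y₁ - y₃ = -(a + b) := by rw [ha, hb]; abel
      have e4 : y₂ - (y₁ + y₃ - y₂) = a - b := by rw [ha, hb]; abel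
      rw [e3, e4, norm_neg] at h2
      have p1 := real_inner_eq_norm_add_mul_self_sub_norm_mul_self_sub_norm_mul_self_div_two a b
      have p2 := real_inner_eq_norm_mul_self_add_norm_mul_self_sub_norm_sub_mul_self_div_two a b
      rw [h2] at p1
      linarith
  · rintro ⟨hsum, hside, hinner⟩
    have hy4 : y₄ = y₁ + y₃ - y₂ := by
      rw [eq_sub_iff_add_eq, add_comm]; exact hsum.symm
    subst hy4
    refine ⟨hmid.mpr hsum, ?_, ?_⟩
    · set a := y₂ - y₁ with ha
      set b := y₃ - y₂ with hb
      have e3 : y₁ - y₃ = -(a + b) := by rw [ha, hb]; abel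
      have e4 : y₂ - (y₁ + y₃ - y₂) = a - b := by rw [ha, hb]; abel
      rw [e3, e4, norm_neg]
      have : (inner ℝ b a : ℝ) = 0 := by rw [real_inner_comm]; exact hinner
      exact (norm_sub_eq_norm_add this).symm
    · have e1 : y₃ - (y₁ + y₃ - y₂) = y₂ - y₁ := by abel
      have e2 : (y₁ + y₃ - y₂) - y₁ = y₃ - y₂ := by abel
      rw [e1, e2, norm_sub_rev y₂ y₁, norm_sub_rev y₃ y₂]
      linarith
end
end

section
/- Let x₁, …, x₆ ∈ ℝ² be six points that do not all lie on one line. Then (x₁,…,x₆) is an affine-regular hexagon if and only if x₁ + x₄ = x₂ + x₅ = x₃ + x₆ and x₁ − x₂ + x₃ − x₄ + x₅ − x₆ = 0. -/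
open Real

noncomputable section

/-- The `j`-th vertex (for `j : Fin 6`, corresponding to index `j+1 ∈ {1,…,6}`)
of the regular hexagon with vertices `(cos(kπ/3), sin(kπ/3))`, `k = 1,…,6`. -/
def regularHexVertex (j : Fin 6) : EuclideanSpace ℝ (Fin 2) :=
  WithLp.toLp 2 ![Real.cos (((j : ℕ) + 1) * π / 3), Real.sin (((j : ℕ) + 1) * π / 3)]

/-- A 6-tuple of points of the plane is an affine-regular hexagon if it is the image of
the vertices of the regular hexagon under an invertible affine transformation. -/
def AffineRegularHexagon (x : Fin 6 → EuclideanSpace ℝ (Fin 2)) : Prop :=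
  ∃ T : EuclideanSpace ℝ (Fin 2) ≃ᵃ[ℝ] EuclideanSpace ℝ (Fin 2),
    ∀ j : Fin 6, x j = T (regularHexVertex j)

lemma hex0 : regularHexVertex 0 = WithLp.toLp 2 ![1/2, Real.sqrt 3/2] := by
  have h : (((0:Fin 6) : ℕ) + 1 : ℝ) * π / 3 = π/3 := by norm_num
  unfold regularHexVertex
  rw [h]; norm_num [Real.cos_pi_div_three, Real.sin_pi_div_three]

lemma hex1 : regularHexVertex 1 = WithLp.toLp 2 ![-(1/2), Real.sqrt 3/2] := by
  have h : (((1:Fin 6) : ℕ) + 1 : ℝ) * π / 3 = π - π/3 := by norm_num; ring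
  unfold regularHexVertex
  rw [h, Real.cos_pi_sub, Real.sin_pi_sub]
  norm_num [Real.cos_pi_div_three, Real.sin_pi_div_three]

lemma hex2 : regularHexVertex 2 = WithLp.toLp 2 ![(-1:ℝ), 0] := by
  have h : (((2:Fin 6) : ℕ) + 1 : ℝ) * π / 3 = π := by norm_num
  unfold regularHexVertex
  rw [h]; norm_num

lemma hex3 : regularHexVertex 3 = WithLp.toLp 2 ![-(1/2), -(Real.sqrt 3/2)] := by
  have h : (((3:Fin 6) : ℕ) + 1 : ℝ) * π / 3 = π/3 + π := by
    simp only [show ((3:Fin 6):ℕ) = 3 from rfl]; push_cast; ring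
  unfold regularHexVertex
  rw [h, Real.cos_add_pi, Real.sin_add_pi]
  norm_num [Real.cos_pi_div_three, Real.sin_pi_div_three]

lemma hex4 : regularHexVertex 4 = WithLp.toLp 2 ![1/2, -(Real.sqrt 3/2)] := by
  have h : (((4:Fin 6) : ℕ) + 1 : ℝ) * π / 3 = 2*π - π/3 := by
    simp only [show ((4:Fin 6):ℕ) = 4 from rfl]; push_cast; ring
  unfold regularHexVertex
  rw [h, Real.cos_two_pi_sub, Real.sin_two_pi_sub]
  norm_num [Real.cos_pi_div_three, Real.sin_pi_div_three]

lemma hex5 : regularHexVertex 5 = WithLp.toLp 2 ![(1:ℝ), 0] := by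
  have h : (((5:Fin 6) : ℕ) + 1 : ℝ) * π / 3 = 2*π := by
    simp only [show ((5:Fin 6):ℕ) = 5 from rfl]; push_cast; ring
  unfold regularHexVertex
  rw [h, Real.cos_two_pi, Real.sin_two_pi]

lemma hexv3 : regularHexVertex 3 = -regularHexVertex 0 := by
  rw [hex0, hex3]; ext i; fin_cases i <;> simp
lemma hexv4 : regularHexVertex 4 = -regularHexVertex 1 := by
  rw [hex1, hex4]; ext i; fin_cases i <;> simp
lemma hexv2 : regularHexVertex 2 = regularHexVertex 1 - regularHexVertex 0 := by
  rw [hex0, hex1, hex2]; ext i; fin_cases i <;> simp <;> ring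
lemma hexv5 : regularHexVertex 5 = regularHexVertex 0 - regularHexVertex 1 := by
  rw [hex0, hex1, hex5]; ext i; fin_cases i <;> simp <;> ring

lemma hexLI : LinearIndependent ℝ ![regularHexVertex 0, regularHexVertex 1] := by
  rw [LinearIndependent.pair_iff]
  intro s t hst
  rw [hex0, hex1] at hst
  have h0 := congrArg (· 0) hst
  have h1 := congrArg (· 1) hst
  simp [PiLp.smul_apply, PiLp.add_apply] at h0 h1
  have h3 : Real.sqrt 3 > 0 := by positivity
  have hsum : (s + t) * (Real.sqrt 3 / 2) = 0 := by linarith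
  rcases mul_eq_zero.1 hsum with h | h
  · constructor <;> linarith
  · linarith

/-- Six points of the plane which are not collinear form an affine-regular hexagon iff
the main diagonals have a common midpoint and the alternating sum of the vertices
vanishes. -/
theorem affineRegularHexagon_iff
    (x₁ x₂ x₃ x₄ x₅ x₆ : EuclideanSpace ℝ (Fin 2))
    (hcol : ¬ Collinear ℝ ({x₁, x₂, x₃, x₄, x₅, x₆} : Set (EuclideanSpace ℝ (Fin 2)))) :
    AffineRegularHexagon ![x₁, x₂, x₃, x₄, x₅, x₆] ↔
      (x₁ + x₄ = x₂ + x₅ ∧ x₂ + x₅ = x₃ + x₆ ∧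
       x₁ - x₂ + x₃ - x₄ + x₅ - x₆ = 0) := by
  constructor
  · rintro ⟨T, hT⟩
    have key : ∀ p, T p = T.linear p + T 0 := by
      intro p
      have := T.toAffineMap.map_vadd 0 p
      simpa using this
    have e : ∀ j, (![x₁, x₂, x₃, x₄, x₅, x₆] : Fin 6 → EuclideanSpace ℝ (Fin 2)) j
        = T.linear (regularHexVertex j) + T 0 := fun j => (hT j).trans (key _)
    have e1 : x₁ = T.linear (regularHexVertex 0) + T 0 := by simpa using e 0
    have e2 : x₂ = T.linear (regularHexVertex 1) + T 0 := by simpa using e 1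
    have e3 : x₃ = T.linear (regularHexVertex 2) + T 0 := by simpa using e 2
    have e4 : x₄ = T.linear (regularHexVertex 3) + T 0 := by simpa using e 3
    have e5 : x₅ = T.linear (regularHexVertex 4) + T 0 := by simpa using e 4
    have e6 : x₆ = T.linear (regularHexVertex 5) + T 0 := by simpa using e 5
    refine ⟨?_, ?_, ?_⟩ <;>
    · simp only [e1, e2, e3, e4, e5, e6, hexv2, hexv3, hexv4, hexv5, map_neg, map_sub]
      abel
  · rintro ⟨h1, h2, h3⟩
    set c : EuclideanSpace ℝ (Fin 2) := (2⁻¹ : ℝ) • (x₁ + x₄) with hc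
    set a : EuclideanSpace ℝ (Fin 2) := x₁ - c with ha
    set b : EuclideanSpace ℝ (Fin 2) := x₂ - c with hb
    have e1 : x₁ = c + a := by rw [ha]; abel
    have e2 : x₂ = c + b := by rw [hb]; abel
    have e4 : x₄ = c - a := by
      simp only [ha, hc]; module
    have e5 : x₅ = c - b := by
      simp only [hb, hc]; linear_combination (norm := module) -h1
    have e3 : x₃ = c + (b - a) := by
      simp only [ha, hb, hc]
      linear_combination (norm := module) (-2⁻¹ : ℝ) • h2 + (2⁻¹ : ℝ) • h3
    have e6 : x₆ = c - (b - a) := by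
      simp only [ha, hb, hc]
      linear_combination (norm := module) (-1 : ℝ) • h1 + (-2⁻¹ : ℝ) • h2 + (-2⁻¹ : ℝ) • h3
    have hab : LinearIndependent ℝ ![a, b] := by
      by_contra hli
      apply hcol
      rw [LinearIndependent.pair_iff] at hli
      push_neg at hli
      obtain ⟨s, t, hst, hne⟩ := hli
      rw [collinear_iff_exists_forall_eq_smul_vadd]
      rcases eq_or_ne t 0 with ht | ht
      · subst ht
        have hs : s ≠ 0 := by simpa using hne
        have haz : a = 0 := by
          have h' : s • a = 0 := by simpa using hst
          exact (smul_eq_zero.1 h').resolve_left hs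
        refine ⟨c, b, ?_⟩
        intro p hp
        simp only [Set.mem_insert_iff, Set.mem_singleton_iff] at hp
        rcases hp with rfl|rfl|rfl|rfl|rfl|rfl
        · exact ⟨0, by rw [e1, haz, vadd_eq_add]; module⟩
        · exact ⟨1, by rw [e2, vadd_eq_add]; module⟩
        · exact ⟨1, by rw [e3, haz, vadd_eq_add]; module⟩
        · exact ⟨0, by rw [e4, haz, vadd_eq_add]; module⟩
        · exact ⟨-1, by rw [e5, vadd_eq_add]; module⟩
        · exact ⟨-1, by rw [e6, haz, vadd_eq_add]; module⟩
      · have hbt : t • b = (-s) • a := by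
          linear_combination (norm := module) hst
        have hb' : b = (t⁻¹ * (-s)) • a := by
          rw [mul_smul, ← hbt, inv_smul_smul₀ ht]
        refine ⟨c, a, ?_⟩
        intro p hp
        simp only [Set.mem_insert_iff, Set.mem_singleton_iff] at hp
        rcases hp with rfl|rfl|rfl|rfl|rfl|rfl
        · exact ⟨1, by rw [e1, vadd_eq_add]; module⟩
        · exact ⟨t⁻¹ * (-s), by rw [e2, hb', vadd_eq_add]; module⟩
        · exact ⟨t⁻¹ * (-s) - 1, by rw [e3, hb', vadd_eq_add]; module⟩
        · exact ⟨-1, by rw [e4, vadd_eq_add]; module⟩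
        · exact ⟨-(t⁻¹ * (-s)), by rw [e5, hb', vadd_eq_add]; module⟩
        · exact ⟨1 - t⁻¹ * (-s), by rw [e6, hb', vadd_eq_add]; module⟩
    have hcard : Fintype.card (Fin 2) = Module.finrank ℝ (EuclideanSpace ℝ (Fin 2)) := by
      simp [finrank_euclideanSpace]
    let B : Module.Basis (Fin 2) ℝ (EuclideanSpace ℝ (Fin 2)) :=
      basisOfLinearIndependentOfCardEqFinrank hexLI hcard
    let B' : Module.Basis (Fin 2) ℝ (EuclideanSpace ℝ (Fin 2)) :=
      basisOfLinearIndependentOfCardEqFinrank hab hcard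
    let L := B.equiv B' (Equiv.refl _)
    have hB : ∀ i, B i = ![regularHexVertex 0, regularHexVertex 1] i := by
      intro i
      simp [B, coe_basisOfLinearIndependentOfCardEqFinrank]
    have hB' : ∀ i, B' i = ![a, b] i := by
      intro i
      simp [B', coe_basisOfLinearIndependentOfCardEqFinrank]
    have hL0 : L (regularHexVertex 0) = a := by
      have h := hB 0
      simp only [Matrix.cons_val_zero] at h
      rw [← h]
      show B.equiv B' (Equiv.refl _) (B 0) = a
      rw [Module.Basis.equiv_apply]
      simpa using hB' 0
    have hL1 : L (regularHexVertex 1) = b := by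
      have h := hB 1
      simp only [Matrix.cons_val_one, Matrix.head_cons, Matrix.cons_val_zero] at h
      rw [← h]
      show B.equiv B' (Equiv.refl _) (B 1) = b
      rw [Module.Basis.equiv_apply]
      simpa using hB' 1
    refine ⟨(L.toAffineEquiv).trans (AffineEquiv.constVAdd ℝ (EuclideanSpace ℝ (Fin 2)) c), ?_⟩
    intro j
    have hTp : ∀ p, ((L.toAffineEquiv).trans
        (AffineEquiv.constVAdd ℝ (EuclideanSpace ℝ (Fin 2)) c)) p = c + L p := by
      intro p
      simp [AffineEquiv.trans_apply, AffineEquiv.constVAdd_apply, vadd_eq_add]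
    fin_cases j
    · simpa using (by rw [hTp, hL0]; exact e1 :
        x₁ = ((L.toAffineEquiv).trans (AffineEquiv.constVAdd ℝ _ c)) (regularHexVertex 0))
    · simpa using (by rw [hTp, hL1]; exact e2 :
        x₂ = ((L.toAffineEquiv).trans (AffineEquiv.constVAdd ℝ _ c)) (regularHexVertex 1))
    · simpa using (by rw [hTp, hexv2, map_sub, hL0, hL1]; exact e3 :
        x₃ = ((L.toAffineEquiv).trans (AffineEquiv.constVAdd ℝ _ c)) (regularHexVertex 2))
    · simpa using (by rw [hTp, hexv3, map_neg, hL0]; rw [e4]; abel :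
        x₄ = ((L.toAffineEquiv).trans (AffineEquiv.constVAdd ℝ _ c)) (regularHexVertex 3))
    · simpa using (by rw [hTp, hexv4, map_neg, hL1]; rw [e5]; abel :
        x₅ = ((L.toAffineEquiv).trans (AffineEquiv.constVAdd ℝ _ c)) (regularHexVertex 4))
    · simpa using (by rw [hTp, hexv5, map_sub, hL0, hL1]; rw [e6]; abel :
        x₆ = ((L.toAffineEquiv).trans (AffineEquiv.constVAdd ℝ _ c)) (regularHexVertex 5))
end
end

section
/- Let x₁, …, x₆ ∈ ℝ be pairwise distinct real numbers satisfying x₁ + x₄ = x₂ + x₅ = x₃ + x₆ and x₁ − x₂ + x₃ − x₄ + x₅ − x₆ = 0. Then the indices cannot appear in cyclic order on the line: for no i ∈ {0,1,2,3,4,5} does x_{i+1} < x_{i+2} < x_{i+3} < x_{i+4} < x_{i+5} < x_{i+6} hold (indices taken modulo 6), and likewise for no i does x_{i+1} > x_{i+2} > x_{i+3} > x_{i+4} > x_{i+5} > x_{i+6} hold. -/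
lemma hex_key (a b c d e f : ℝ) (h1 : a + d = b + e) (h2 : b + e = c + f) :
    ¬ (a < b ∧ b < c ∧ c < d ∧ d < e ∧ e < f) := by
  rintro ⟨p, q, r, s, t⟩; linarith

lemma hex_key' (a b c d e f : ℝ) (h1 : a + d = b + e) (h2 : b + e = c + f) :
    ¬ (a > b ∧ b > c ∧ c > d ∧ d > e ∧ e > f) := by
  rintro ⟨p, q, r, s, t⟩; linarith

/-- Six pairwise distinct real numbers forming a degenerate (collinear) affine-regular
hexagon never appear on the line in cyclic order of their indices, in either direction. -/
theorem degenerate_hexagon_not_cyclic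
    (x : Fin 6 → ℝ) (hinj : Function.Injective x)
    (h₁ : x 0 + x 3 = x 1 + x 4) (h₂ : x 1 + x 4 = x 2 + x 5)
    (h₃ : x 0 - x 1 + x 2 - x 3 + x 4 - x 5 = 0) :
    ∀ i : Fin 6,
      (¬ (x (i + 1) < x (i + 2) ∧ x (i + 2) < x (i + 3) ∧ x (i + 3) < x (i + 4) ∧
          x (i + 4) < x (i + 5) ∧ x (i + 5) < x (i + 6))) ∧
      (¬ (x (i + 1) > x (i + 2) ∧ x (i + 2) > x (i + 3) ∧ x (i + 3) > x (i + 4) ∧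
          x (i + 4) > x (i + 5) ∧ x (i + 5) > x (i + 6))) := by
  intro i
  fin_cases i
  · exact ⟨hex_key (x 1) (x 2) (x 3) (x 4) (x 5) (x 0) (by linarith) (by linarith),
      hex_key' (x 1) (x 2) (x 3) (x 4) (x 5) (x 0) (by linarith) (by linarith)⟩
  · exact ⟨hex_key (x 2) (x 3) (x 4) (x 5) (x 0) (x 1) (by linarith) (by linarith),
      hex_key' (x 2) (x 3) (x 4) (x 5) (x 0) (x 1) (by linarith) (by linarith)⟩
  · exact ⟨hex_key (x 3) (x 4) (x 5) (x 0) (x 1) (x 2) (by linarith) (by linarith),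
      hex_key' (x 3) (x 4) (x 5) (x 0) (x 1) (x 2) (by linarith) (by linarith)⟩
  · exact ⟨hex_key (x 4) (x 5) (x 0) (x 1) (x 2) (x 3) (by linarith) (by linarith),
      hex_key' (x 4) (x 5) (x 0) (x 1) (x 2) (x 3) (by linarith) (by linarith)⟩
  · exact ⟨hex_key (x 5) (x 0) (x 1) (x 2) (x 3) (x 4) (by linarith) (by linarith),
      hex_key' (x 5) (x 0) (x 1) (x 2) (x 3) (x 4) (by linarith) (by linarith)⟩
  · exact ⟨hex_key (x 0) (x 1) (x 2) (x 3) (x 4) (x 5) (by linarith) (by linarith),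
      hex_key' (x 0) (x 1) (x 2) (x 3) (x 4) (x 5) (by linarith) (by linarith)⟩
end

section
/- Let S¹ = {x ∈ ℝ² : ‖x‖ = 1} be the unit circle. The closure, inside S¹ × S¹ × S¹, of the set {(x, y, (x−y)/‖x−y‖) : x, y ∈ S¹, x ≠ y} (the graph of the normalized difference map on the configuration space of ordered pairs of distinct points of S¹) is homeomorphic to the annulus S¹ × [0, 1]. -/
noncomputable section

open Complex Set Metric

namespace BlowupAux

/-- unit circle in ℂ -/
abbrev Cir : Set ℂ := Metric.sphere (0 : ℂ) 1

lemma mem_Cir_iff {z : ℂ} : z ∈ Cir ↔ ‖z‖ = 1 := by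
  simp [mem_sphere_zero_iff_norm]

/-- the set A in the complex model -/
def A : Set (Cir × Cir × Cir) :=
  {p | (p.1 : ℂ) ≠ (p.2.1 : ℂ) ∧
    (p.2.2 : ℂ) = ‖(p.1 : ℂ) - (p.2.1 : ℂ)‖⁻¹ • ((p.1 : ℂ) - (p.2.1 : ℂ))}

lemma mem1 (u : Cir) (s : ℝ) : -I * (u : ℂ) * exp ((s * Real.pi : ℝ) * I) ∈ Cir := by
  have hu : ‖(u:ℂ)‖ = 1 := mem_Cir_iff.mp u.2
  have h1 := Complex.norm_exp_ofReal_mul_I (s * Real.pi)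
  push_cast at h1
  simp [mem_Cir_iff, norm_mul, hu, h1]

lemma mem2 (u : Cir) (s : ℝ) : -I * (u : ℂ) * exp ((-(s * Real.pi) : ℝ) * I) ∈ Cir := by
  have hu : ‖(u:ℂ)‖ = 1 := mem_Cir_iff.mp u.2
  have h1 := Complex.norm_exp_ofReal_mul_I (-(s * Real.pi))
  push_cast at h1
  rw [neg_mul, mul_assoc] at h1
  simp [mem_Cir_iff, norm_mul, hu, mul_assoc, h1]

/-- the parametrization -/
def F (p : Cir × Set.Icc (0 : ℝ) 1) : Cir × Cir × Cir :=
  (⟨_, mem1 p.1 p.2⟩, ⟨_, mem2 p.1 p.2⟩, p.1)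

lemma contF : Continuous F := by
  apply Continuous.prodMk
  · apply Continuous.subtype_mk
    fun_prop
  apply Continuous.prodMk
  · apply Continuous.subtype_mk
    fun_prop
  · exact continuous_fst

lemma injF : Function.Injective F := by
  rintro ⟨u, s, hs0, hs1⟩ ⟨v, t, ht0, ht1⟩ h
  have hu : u = v := congrArg (Prod.snd ∘ Prod.snd) h
  subst hu
  have h1 : -I * (u : ℂ) * exp ((s * Real.pi : ℝ) * I)
      = -I * (u : ℂ) * exp ((t * Real.pi : ℝ) * I) := congrArg (fun q => (q.1 : ℂ)) h
  have hne : -I * (u : ℂ) ≠ 0 := by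
    have : (u : ℂ) ≠ 0 := by
      intro h0
      have := mem_Cir_iff.mp u.2
      simp [h0] at this
    simp [this, I_ne_zero]
  have h2 : exp ((s * Real.pi : ℝ) * I) = exp ((t * Real.pi : ℝ) * I) :=
    mul_left_cancel₀ hne h1
  have h3 : Real.cos (s * Real.pi) = Real.cos (t * Real.pi) := by
    have := congrArg Complex.re h2
    rwa [exp_ofReal_mul_I_re, exp_ofReal_mul_I_re] at this
  have hst : s * Real.pi = t * Real.pi := by
    apply Real.injOn_cos _ _ h3
    · constructor
      · positivity
      · nlinarith [Real.pi_pos]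
    · constructor
      · positivity
      · nlinarith [Real.pi_pos]
  have : s = t := by
    have := Real.pi_pos
    field_simp at hst
    exact hst
  simp [this]


lemma F_mem_A (u : Cir) (s : Set.Icc (0:ℝ) 1) (hs : (s:ℝ) ∈ Set.Ioo (0:ℝ) 1) :
    F (u, s) ∈ A := by
  obtain ⟨hs0, hs1⟩ := hs
  have hpi := Real.pi_pos
  set θ : ℝ := (s:ℝ) * Real.pi with hθ
  have hθ0 : 0 < θ := by positivity
  have hθπ : θ < Real.pi := by
    have : (s:ℝ) * Real.pi < 1 * Real.pi := by
      apply mul_lt_mul_of_pos_right hs1 hpi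
    simpa using this
  have hsin : 0 < Real.sin θ := Real.sin_pos_of_pos_of_lt_pi hθ0 hθπ
  have hu : ‖(u:ℂ)‖ = 1 := mem_Cir_iff.mp u.2
  have hdiff : (-I * (u:ℂ) * exp ((θ:ℝ) * I)) - (-I * (u:ℂ) * exp ((-θ:ℝ) * I))
      = ((2 * Real.sin θ : ℝ) : ℂ) * u := by
    rw [exp_mul_I, exp_mul_I]
    push_cast
    rw [Complex.cos_neg, Complex.sin_neg]
    ring_nf
    rw [Complex.I_sq]
    ring
  have hnorm : ‖(-I * (u:ℂ) * exp ((θ:ℝ) * I)) - (-I * (u:ℂ) * exp ((-θ:ℝ) * I))‖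
      = 2 * Real.sin θ := by
    rw [hdiff, norm_mul, hu, Complex.norm_real, Real.norm_eq_abs]
    rw [abs_of_pos (by positivity)]
    ring
  constructor
  · show (-I * (u:ℂ) * exp ((θ:ℝ) * I)) ≠ (-I * (u:ℂ) * exp ((-θ:ℝ) * I))
    intro h
    rw [h, sub_self, norm_zero] at hnorm
    nlinarith
  · show (u:ℂ) = ‖(-I * (u:ℂ) * exp ((θ:ℝ) * I)) - (-I * (u:ℂ) * exp ((-θ:ℝ) * I))‖⁻¹ •
      ((-I * (u:ℂ) * exp ((θ:ℝ) * I)) - (-I * (u:ℂ) * exp ((-θ:ℝ) * I)))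
    rw [hnorm, hdiff, Complex.real_smul]
    push_cast
    have h2 : (2 * Real.sin θ : ℝ) ≠ 0 := by positivity
    have h3 : (2 : ℂ) * Complex.sin (θ:ℂ) ≠ 0 := by
      rw [← Complex.ofReal_sin]
      exact_mod_cast Complex.ofReal_ne_zero.mpr h2
    rw [inv_mul_cancel_left₀ h3]


lemma A_subset_range : A ⊆ Set.range F := by
  rintro ⟨x, y, w⟩ ⟨hne, hw⟩
  have hpi := Real.pi_pos
  have hx : ‖(x:ℂ)‖ = 1 := mem_Cir_iff.mp x.2
  have hy : ‖(y:ℂ)‖ = 1 := mem_Cir_iff.mp y.2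
  have hwabs : ‖(w:ℂ)‖ = 1 := mem_Cir_iff.mp w.2
  have hx0 : (x:ℂ) ≠ 0 := by intro h; rw [h] at hx; simp at hx
  have hy0 : (y:ℂ) ≠ 0 := by intro h; rw [h] at hy; simp at hy
  replace hne : (x:ℂ) ≠ (y:ℂ) := hne
  replace hw : (w:ℂ) = ‖(x:ℂ) - (y:ℂ)‖⁻¹ • ((x:ℂ) - (y:ℂ)) := hw
  have hd : (x:ℂ) - (y:ℂ) ≠ 0 := sub_ne_zero.mpr hne
  set n : ℝ := ‖(x:ℂ) - (y:ℂ)‖ with hn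
  have hn0 : 0 < n := by rw [hn]; exact norm_pos_iff.mpr hd
  have hnC : ((n:ℝ):ℂ) ≠ 0 := Complex.ofReal_ne_zero.mpr hn0.ne'
  have hxc : (x:ℂ) * (starRingEnd ℂ) (x:ℂ) = 1 := by
    rw [Complex.mul_conj, Complex.normSq_eq_norm_sq, hx]; norm_num
  have hyc : (y:ℂ) * (starRingEnd ℂ) (y:ℂ) = 1 := by
    rw [Complex.mul_conj, Complex.normSq_eq_norm_sq, hy]; norm_num
  have hw' : (w:ℂ) = ((n:ℝ):ℂ)⁻¹ * ((x:ℂ) - (y:ℂ)) := by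
    rw [hw, Complex.real_smul]; push_cast; ring
  set v : ℂ := -I * (w:ℂ) with hv
  have hvabs : ‖v‖ = 1 := by simp [hv, hwabs]
  have hvc : v * (starRingEnd ℂ) v = 1 := by
    rw [Complex.mul_conj, Complex.normSq_eq_norm_sq, hvabs]; norm_num
  set c : ℂ := (x:ℂ) * (starRingEnd ℂ) v with hc
  have hcabs : ‖c‖ = 1 := by
    rw [hc, norm_mul, Complex.norm_conj, hx, hvabs]; norm_num
  have hnc : ((n:ℝ):ℂ)^2 = ((x:ℂ) - y) * (starRingEnd ℂ) ((x:ℂ) - (y:ℂ)) := by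
    rw [Complex.mul_conj]
    norm_cast
    rw [hn, Complex.sq_norm]
  have hcx : (starRingEnd ℂ) (x:ℂ) = (x:ℂ)⁻¹ := eq_inv_of_mul_eq_one_right hxc
  have hcy : (starRingEnd ℂ) (y:ℂ) = (y:ℂ)⁻¹ := eq_inv_of_mul_eq_one_right hyc
  have hkey : ((x:ℂ) - y)^2 = -((n:ℝ):ℂ)^2 * ((x:ℂ) * y) := by
    rw [map_sub, hcx, hcy] at hnc
    field_simp at hnc
    linear_combination hnc
  have hv2 : v^2 = (x:ℂ) * y := by
    have e1 : v^2 = (I^2) * (((n:ℝ):ℂ)⁻¹)^2 * ((x:ℂ)-y)^2 := by rw [hv, hw']; ring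
    rw [Complex.I_sq, hkey] at e1
    rw [e1]
    field_simp
  -- imaginary part of c is positive
  have hnsq1 : Complex.normSq (x:ℂ) = 1 := by rw [← Complex.sq_norm, hx]; norm_num
  have hnsq2 : Complex.normSq (y:ℂ) = 1 := by rw [← Complex.sq_norm, hy]; norm_num
  have hre : ((x:ℂ) * (starRingEnd ℂ) (y:ℂ)).re < 1 := by
    have h0 : 0 < Complex.normSq ((x:ℂ) - y) := Complex.normSq_pos.mpr hd
    rw [Complex.normSq_sub, hnsq1, hnsq2] at h0
    linarith
  have hc2 : c = I * ((((n:ℝ)⁻¹:ℝ):ℂ) * (1 - (x:ℂ) * (starRingEnd ℂ) (y:ℂ))) := by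
    rw [hc, hv, hw']
    simp only [map_mul, map_sub, map_neg, map_inv₀, Complex.conj_I, Complex.conj_ofReal]
    push_cast
    linear_combination (I * ((n:ℝ):ℂ)⁻¹) * hxc
  have him : 0 < c.im := by
    rw [hc2]
    have : (I * ((((n:ℝ)⁻¹:ℝ):ℂ) * (1 - (x:ℂ) * (starRingEnd ℂ) (y:ℂ)))).im
        = n⁻¹ * (1 - ((x:ℂ) * (starRingEnd ℂ) (y:ℂ)).re) := by
      simp [Complex.mul_im, Complex.mul_re]
    rw [this]
    have h1 : 0 < (n:ℝ)⁻¹ := by positivity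
    nlinarith
  set θ := Complex.arg c with hθdef
  have hθ0 : 0 < θ := by
    rcases lt_or_eq_of_le (Complex.arg_nonneg_iff.mpr him.le) with h | h
    · exact h
    · exfalso
      have := Complex.arg_eq_zero_iff.mp h.symm
      exact him.ne' this.2
  have hθπ : θ < Real.pi := Complex.arg_lt_pi_iff.mpr (Or.inr him.ne')
  refine ⟨(w, ⟨θ / Real.pi, ⟨by positivity, by rw [div_le_one hpi]; exact hθπ.le⟩⟩), ?_⟩
  have hsπ : θ / Real.pi * Real.pi = θ := div_mul_cancel₀ θ hpi.ne'
  have hexp : exp ((θ:ℝ) * I) = c := by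
    have h := Complex.norm_mul_exp_arg_mul_I c
    rwa [hcabs, Complex.ofReal_one, one_mul] at h
  have hexpneg : exp (((-θ:ℝ):ℂ) * I) = (starRingEnd ℂ) c := by
    rw [← hexp, ← Complex.exp_conj]
    congr 1
    simp [map_mul, Complex.conj_I, Complex.conj_ofReal]
  refine Prod.ext (Subtype.ext ?_) (Prod.ext (Subtype.ext ?_) rfl)
  · show -I * (w:ℂ) * exp ((((θ / Real.pi) * Real.pi : ℝ):ℂ) * I) = (x:ℂ)
    rw [hsπ, hexp, hc]
    linear_combination (x:ℂ) * hvc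
  · show -I * (w:ℂ) * exp (((-(θ / Real.pi * Real.pi) : ℝ):ℂ) * I) = (y:ℂ)
    rw [hsπ, hexpneg, hc]
    simp only [map_mul, Complex.conj_conj]
    linear_combination ((starRingEnd ℂ) (x:ℂ)) * hv2 + (y:ℂ) * hxc


lemma range_subset_closure : Set.range F ⊆ closure A := by
  rintro _ ⟨⟨u, s, hs0, hs1⟩, rfl⟩
  have hseq : ∀ n : ℕ, ((1 - (1:ℝ)/(n+2)) * s + (1/(n+2))/2) ∈ Set.Ioo (0:ℝ) 1 := by
    intro n
    have h2 : (0:ℝ) < 1/(n+2) := by positivity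
    have h3 : (1:ℝ)/(n+2) ≤ 1/2 := by
      apply div_le_div_of_nonneg_left (by norm_num) (by norm_num)
      · linarith [Nat.cast_nonneg (α := ℝ) n]
    constructor
    · nlinarith
    · nlinarith
  set t : ℕ → ℝ := fun n => (1 - (1:ℝ)/(n+2)) * s + (1/(n+2))/2 with ht
  have h1 : Filter.Tendsto (fun n : ℕ => ((n:ℝ)+2)⁻¹) Filter.atTop (nhds 0) :=
    Filter.Tendsto.comp tendsto_inv_atTop_zero
      (Filter.tendsto_atTop_add_const_right _ 2 tendsto_natCast_atTop_atTop)
  have htend : Filter.Tendsto t Filter.atTop (nhds s) := by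
    have h2 := (((tendsto_const_nhds (x := (1:ℝ)) (f := Filter.atTop (α := ℕ))).sub h1).mul (tendsto_const_nhds (x := s))).add (h1.div_const 2)
    rw [ht]
    simpa [one_div] using h2
  have htend2 : Filter.Tendsto
      (fun n => F (u, ⟨t n, Set.Ioo_subset_Icc_self (hseq n)⟩)) Filter.atTop
      (nhds (F (u, ⟨s, hs0, hs1⟩))) := by
    apply (contF.continuousAt).tendsto.comp
    rw [nhds_prod_eq]
    apply Filter.Tendsto.prodMk tendsto_const_nhds
    rw [tendsto_subtype_rng]
    exact htend
  exact mem_closure_of_tendsto htend2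
    (Filter.Eventually.of_forall fun n => F_mem_A u _ (hseq n))

lemma closure_A_eq : closure A = Set.range F :=
  Set.Subset.antisymm
    (closure_minimal A_subset_range ((isCompact_range contF).isClosed))
    range_subset_closure

/-- homeomorphism from the cylinder to the closure of `A` -/
def homeoCA : (↥Cir × ↥(Set.Icc (0:ℝ) 1)) ≃ₜ ↥(closure A) := by
  have hcont : Continuous ((Equiv.ofInjective F injF).trans
      (Equiv.setCongr closure_A_eq.symm)) := by
    apply Continuous.subtype_mk contF
  exact hcont.homeoOfEquivCompactToT2

abbrev E2 := EuclideanSpace ℝ (Fin 2)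

def L : ℂ ≃ₗᵢ[ℝ] E2 := Complex.orthonormalBasisOneI.repr

/-- circle in the euclidean model -/
abbrev S2 : Set E2 := Metric.sphere (0 : E2) 1

lemma L_mem (z : ↥Cir) : L (z:ℂ) ∈ S2 := by
  rw [mem_sphere_zero_iff_norm, L.norm_map]
  exact mem_sphere_zero_iff_norm.mp z.2

lemma Lsymm_mem (z : ↥S2) : L.symm (z:E2) ∈ Cir := by
  rw [mem_sphere_zero_iff_norm, L.symm.norm_map]
  exact mem_sphere_zero_iff_norm.mp z.2

def sphereHomeo : ↥Cir ≃ₜ ↥S2 where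
  toFun z := ⟨L z, L_mem z⟩
  invFun z := ⟨L.symm z, Lsymm_mem z⟩
  left_inv z := Subtype.ext (L.symm_apply_apply z)
  right_inv z := Subtype.ext (L.apply_symm_apply z)
  continuous_toFun :=
    Continuous.subtype_mk (L.continuous.comp continuous_subtype_val) L_mem
  continuous_invFun :=
    Continuous.subtype_mk (L.symm.continuous.comp continuous_subtype_val) Lsymm_mem

def Φ : (↥Cir × ↥Cir × ↥Cir) ≃ₜ (↥S2 × ↥S2 × ↥S2) :=
  sphereHomeo.prodCongr (sphereHomeo.prodCongr sphereHomeo)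

/-- the set in the statement -/
def AE : Set (↥S2 × ↥S2 × ↥S2) :=
  {p | (p.1 : E2) ≠ (p.2.1 : E2) ∧
    (p.2.2 : E2) = ‖(p.1 : E2) - (p.2.1 : E2)‖⁻¹ • ((p.1 : E2) - (p.2.1 : E2))}

lemma A_eq_preimage : A = Φ ⁻¹' AE := by
  ext ⟨x, y, w⟩
  have e0 : Φ (x, y, w) = (sphereHomeo x, sphereHomeo y, sphereHomeo w) := rfl
  have e1 : ((Φ (x, y, w)).1 : E2) = L x := by rw [e0]; rfl
  have e2 : ((Φ (x, y, w)).2.1 : E2) = L y := by rw [e0]; rfl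
  have e3 : ((Φ (x, y, w)).2.2 : E2) = L w := by rw [e0]; rfl
  simp only [A, AE, Set.mem_setOf_eq, Set.mem_preimage, e1, e2, e3]
  rw [← L.map_sub, L.norm_map, ← L.map_smul]
  constructor
  · rintro ⟨h1, h2⟩
    exact ⟨fun h => h1 (L.injective h), by rw [h2]⟩
  · rintro ⟨h1, h2⟩
    exact ⟨fun h => h1 (congrArg L h), L.injective h2⟩

lemma image_A : Φ '' A = AE := by
  rw [A_eq_preimage, Set.image_preimage_eq _ Φ.surjective]

lemma closure_AE : closure AE = Φ '' closure A := by
  rw [← image_A, Φ.image_closure]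

/-- final homeomorphism in the complex model -/
def finalHomeo : ↥(closure AE) ≃ₜ (↥S2 × ↥(Set.Icc (0:ℝ) 1)) :=
  ((Homeomorph.setCongr closure_AE).trans ((Φ.image (closure A)).symm)).trans
    (homeoCA.symm.trans (sphereHomeo.prodCongr (Homeomorph.refl _)))

end BlowupAux

/-- The closure, inside `S¹ × S¹ × S¹`, of the graph of the normalized difference map
`(x, y) ↦ (x − y)/‖x − y‖` on the configuration space of ordered pairs of distinct points
of the unit circle is homeomorphic to the annulus `S¹ × [0,1]`. -/
theorem blowup_of_torus_along_diagonal_is_annulus :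
    Nonempty
      ((closure {p : (Metric.sphere (0 : EuclideanSpace ℝ (Fin 2)) 1) ×
                     (Metric.sphere (0 : EuclideanSpace ℝ (Fin 2)) 1) ×
                     (Metric.sphere (0 : EuclideanSpace ℝ (Fin 2)) 1) |
          (p.1 : EuclideanSpace ℝ (Fin 2)) ≠ (p.2.1 : EuclideanSpace ℝ (Fin 2)) ∧
          (p.2.2 : EuclideanSpace ℝ (Fin 2)) =
            ‖(p.1 : EuclideanSpace ℝ (Fin 2)) - (p.2.1 : EuclideanSpace ℝ (Fin 2))‖⁻¹ •
              ((p.1 : EuclideanSpace ℝ (Fin 2)) - (p.2.1 : EuclideanSpace ℝ (Fin 2)))} :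
          Set _) ≃ₜ
        (Metric.sphere (0 : EuclideanSpace ℝ (Fin 2)) 1 × Set.Icc (0 : ℝ) 1)) :=
  ⟨BlowupAux.finalHomeo⟩
end
end
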